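/- Let S = s_1^{j_1}⋯s_n^{j_n} be a Laurent monomial with integer exponents j_1,…,j_n, and let γ_1,…,γ_n be elements of the Laurent polynomial ring ℤ[s_1^{±1},…,s_n^{±1}]. Then the matrix [[S, Σ_i γ_i t_i],[0,1]] lies in the image of the Magnus representation φ of the free metabelian group M_n if and only if Σ_i γ_i(1 − s_i) = 1 − S. -/

import Mathlib

open MvPolynomial

abbrev LaurentRing (n : ℕ) := AddMonoidAlgebra ℤ (Fin n →₀ ℤ)

noncomputable def sVar (n : ℕ) (i : Fin n) : LaurentRing n :=
  AddMonoidAlgebra.single (Finsupp.single i 1) 1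

noncomputable def sVarInv (n : ℕ) (i : Fin n) : LaurentRing n :=
  AddMonoidAlgebra.single (-Finsupp.single i 1) 1

lemma sVar_mul_sVarInv (n : ℕ) (i : Fin n) : sVar n i * sVarInv n i = 1 := by
  rw [sVar, sVarInv, AddMonoidAlgebra.single_mul_single, add_neg_cancel, one_mul,
    AddMonoidAlgebra.one_def]

abbrev MagnusRing (n : ℕ) := MvPolynomial (Fin n) (LaurentRing n)

noncomputable def magnusUnit (n : ℕ) (i : Fin n) : (Matrix (Fin 2) (Fin 2) (MagnusRing n))ˣ where
  val := !![C (sVar n i), X i; 0, 1]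
  inv := !![C (sVarInv n i), -(C (sVarInv n i) * X i); 0, 1]
  val_inv := by
    have h : (C (sVar n i) * C (sVarInv n i) : MagnusRing n) = 1 := by
      rw [← map_mul, sVar_mul_sVarInv, map_one]
    rw [Matrix.mul_fin_two, Matrix.one_fin_two]
    have e00 : (C (sVar n i) * C (sVarInv n i) + X i * 0 : MagnusRing n) = 1 := by
      linear_combination h
    have e01 : (C (sVar n i) * -(C (sVarInv n i) * X i) + X i * 1 : MagnusRing n) = 0 := by
      linear_combination (-(X i) : MagnusRing n) * h
    rw [e00, e01]
    norm_num
  inv_val := by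
    have h : (C (sVarInv n i) * C (sVar n i) : MagnusRing n) = 1 := by
      rw [← map_mul, mul_comm, sVar_mul_sVarInv, map_one]
    rw [Matrix.mul_fin_two, Matrix.one_fin_two]
    have e00 : (C (sVarInv n i) * C (sVar n i) + -(C (sVarInv n i) * X i) * 0 :
        MagnusRing n) = 1 := by
      linear_combination h
    have e01 : (C (sVarInv n i) * X i + -(C (sVarInv n i) * X i) * 1 : MagnusRing n) = 0 := by
      ring
    rw [e00, e01]
    norm_num

section lowerTriv
variable {R : Type*} [CommRing R]
open scoped commutatorElement

def lowerTriv (R : Type*) [CommRing R] : Subgroup (Matrix (Fin 2) (Fin 2) R)ˣ where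
  carrier := {A | A.val 1 0 = 0 ∧ A.val 1 1 = 1}
  one_mem' := ⟨by simp, by simp⟩
  mul_mem' := by
    rintro A B ⟨ha0, ha1⟩ ⟨hb0, hb1⟩
    constructor <;>
      simp [Units.val_mul, Matrix.mul_apply, Fin.sum_univ_two, ha0, ha1, hb0, hb1]
  inv_mem' := by
    rintro A ⟨h0, h1⟩
    have key : ∀ j, A.inv 1 j = (1 : Matrix (Fin 2) (Fin 2) R) 1 j := by
      intro j
      have h : (A.val * A.inv) 1 j = (1 : Matrix (Fin 2) (Fin 2) R) 1 j := by
        rw [A.val_inv]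
      rwa [Matrix.mul_apply, Fin.sum_univ_two, h0, h1, zero_mul, one_mul, zero_add] at h
    exact ⟨by simpa using key 0, by simpa using key 1⟩

lemma mem_lowerTriv {A : (Matrix (Fin 2) (Fin 2) R)ˣ} :
    A ∈ lowerTriv R ↔ A.val 1 0 = 0 ∧ A.val 1 1 = 1 := Iff.rfl

lemma lowerTriv_mul_apply_zero_zero {A B : (Matrix (Fin 2) (Fin 2) R)ˣ}
    (hB : B ∈ lowerTriv R) :
    (A * B).val 0 0 = A.val 0 0 * B.val 0 0 := by
  obtain ⟨hb0, -⟩ := mem_lowerTriv.mp hB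
  simp [Units.val_mul, Matrix.mul_apply, Fin.sum_univ_two, hb0]

lemma lowerTriv_inv_zero_zero {A : (Matrix (Fin 2) (Fin 2) R)ˣ}
    (hA : A ∈ lowerTriv R) :
    A.val 0 0 * (A⁻¹).val 0 0 = 1 := by
  have h := lowerTriv_mul_apply_zero_zero (A := A) (B := A⁻¹) ((lowerTriv R).inv_mem hA)
  rw [mul_inv_cancel] at h
  simpa using h.symm

def upperUni (R : Type*) [CommRing R] : Subgroup (Matrix (Fin 2) (Fin 2) R)ˣ where
  carrier := {A | A.val 0 0 = 1 ∧ A.val 1 0 = 0 ∧ A.val 1 1 = 1}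
  one_mem' := ⟨by simp, by simp, by simp⟩
  mul_mem' := by
    rintro A B ⟨ha, ha0, ha1⟩ ⟨hb, hb0, hb1⟩
    refine ⟨?_, ?_, ?_⟩ <;>
      simp [Units.val_mul, Matrix.mul_apply, Fin.sum_univ_two, ha, ha0, ha1, hb, hb0, hb1]
  inv_mem' := by
    rintro A ⟨ha, ha0, ha1⟩
    have hmem : A ∈ lowerTriv R := ⟨ha0, ha1⟩
    obtain ⟨h0, h1⟩ := mem_lowerTriv.mp ((lowerTriv R).inv_mem hmem)
    have h := lowerTriv_inv_zero_zero hmem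
    rw [ha, one_mul] at h
    exact ⟨h, h0, h1⟩

lemma mem_upperUni {A : (Matrix (Fin 2) (Fin 2) R)ˣ} :
    A ∈ upperUni R ↔ A.val 0 0 = 1 ∧ A.val 1 0 = 0 ∧ A.val 1 1 = 1 := Iff.rfl

lemma upperUni_comm {A B : (Matrix (Fin 2) (Fin 2) R)ˣ}
    (hA : A ∈ upperUni R) (hB : B ∈ upperUni R) : A * B = B * A := by
  obtain ⟨ha, ha0, ha1⟩ := mem_upperUni.mp hA
  obtain ⟨hb, hb0, hb1⟩ := mem_upperUni.mp hB
  ext : 1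
  rw [Units.val_mul, Units.val_mul, Matrix.eta_fin_two A.val, Matrix.eta_fin_two B.val,
    ha, ha0, ha1, hb, hb0, hb1, Matrix.mul_fin_two, Matrix.mul_fin_two]
  ring_nf

lemma commutator_mem_upperUni {A B : (Matrix (Fin 2) (Fin 2) R)ˣ}
    (hA : A ∈ lowerTriv R) (hB : B ∈ lowerTriv R) : ⁅A, B⁆ ∈ upperUni R := by
  have hAi := (lowerTriv R).inv_mem hA
  have hBi := (lowerTriv R).inv_mem hB
  have hmem : ⁅A, B⁆ ∈ lowerTriv R :=
    Subgroup.mul_mem _ (Subgroup.mul_mem _ (Subgroup.mul_mem _ hA hB) hAi) hBi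
  obtain ⟨hc0, hc1⟩ := mem_lowerTriv.mp hmem
  refine mem_upperUni.mpr ⟨?_, hc0, hc1⟩
  show (A * B * A⁻¹ * B⁻¹).val 0 0 = 1
  rw [lowerTriv_mul_apply_zero_zero hBi, lowerTriv_mul_apply_zero_zero hAi,
    lowerTriv_mul_apply_zero_zero hB]
  have h1 := lowerTriv_inv_zero_zero hA
  have h2 := lowerTriv_inv_zero_zero hB
  calc A.val 0 0 * B.val 0 0 * (A⁻¹).val 0 0 * (B⁻¹).val 0 0
      = (A.val 0 0 * (A⁻¹).val 0 0) * (B.val 0 0 * (B⁻¹).val 0 0) := by ring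
    _ = 1 := by rw [h1, h2, one_mul]

lemma derivedSeries_two_map_eq_one {G : Type*} [Group G]
    (f : G →* (Matrix (Fin 2) (Fin 2) R)ˣ) (hf : ∀ g, f g ∈ lowerTriv R) :
    ∀ x ∈ derivedSeries G 2, f x = 1 := by
  have h1 : derivedSeries G 1 ≤ (upperUni R).comap f := by
    have e : derivedSeries G 1 = ⁅derivedSeries G 0, derivedSeries G 0⁆ :=
      derivedSeries_succ G 0
    rw [e, Subgroup.commutator_le]
    intro g _ h _
    simp only [Subgroup.mem_comap, map_commutatorElement]
    exact commutator_mem_upperUni (hf g) (hf h)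
  have h2 : derivedSeries G 2 ≤ f.ker := by
    have e : derivedSeries G 2 = ⁅derivedSeries G 1, derivedSeries G 1⁆ :=
      derivedSeries_succ G 1
    rw [e, Subgroup.commutator_le]
    intro g hg h hh
    rw [MonoidHom.mem_ker, map_commutatorElement, commutatorElement_eq_one_iff_mul_comm]
    exact upperUni_comm (h1 hg) (h1 hh)
  exact fun x hx => h2 hx

end lowerTriv

abbrev FreeMetabelian (n : ℕ) :=
  FreeGroup (Fin n) ⧸ derivedSeries (FreeGroup (Fin n)) 2

instance (n : ℕ) : (derivedSeries (FreeGroup (Fin n)) 2).Normal :=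
  derivedSeries_normal _ _

def gen (n : ℕ) (i : Fin n) : FreeMetabelian n :=
  QuotientGroup.mk (FreeGroup.of i)

/-- The Magnus representation on the free group. -/
noncomputable def magnusFree (n : ℕ) :
    FreeGroup (Fin n) →* (Matrix (Fin 2) (Fin 2) (MagnusRing n))ˣ :=
  FreeGroup.lift (magnusUnit n)

lemma magnusFree_mem_lowerTriv (n : ℕ) (g : FreeGroup (Fin n)) :
    magnusFree n g ∈ lowerTriv (MagnusRing n) := by
  refine FreeGroup.range_lift_le (s := lowerTriv (MagnusRing n)) ?_ ⟨g, rfl⟩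
  rintro A ⟨i, rfl⟩
  exact ⟨by simp [magnusUnit], by simp [magnusUnit]⟩

/-- The Magnus representation of the free metabelian group. -/
noncomputable def Magnus (n : ℕ) :
    FreeMetabelian n →* (Matrix (Fin 2) (Fin 2) (MagnusRing n))ˣ :=
  QuotientGroup.lift (derivedSeries (FreeGroup (Fin n)) 2) (magnusFree n)
    (derivedSeries_two_map_eq_one (magnusFree n) (magnusFree_mem_lowerTriv n))

/-- The Laurent monomial `s₁^{j₁} ⋯ sₙ^{jₙ}` with exponent vector `j`. -/
noncomputable def sMonomial (n : ℕ) (j : Fin n →₀ ℤ) : LaurentRing n :=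
  AddMonoidAlgebra.single j 1


lemma sMonomial_mul (n : ℕ) (a b : Fin n →₀ ℤ) :
    sMonomial n a * sMonomial n b = sMonomial n (a + b) := by
  rw [sMonomial, sMonomial, sMonomial, AddMonoidAlgebra.single_mul_single, one_mul]

lemma sMonomial_zero (n : ℕ) : sMonomial n 0 = 1 := by
  rw [sMonomial, AddMonoidAlgebra.one_def]

lemma sVar_eq_sMonomial (n : ℕ) (i : Fin n) : sVar n i = sMonomial n (Finsupp.single i 1) := rfl

noncomputable def sUnit (n : ℕ) (j : Fin n →₀ ℤ) : (LaurentRing n)ˣ :=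
  ⟨sMonomial n j, sMonomial n (-j),
   by rw [sMonomial_mul, add_neg_cancel, sMonomial_zero],
   by rw [sMonomial_mul, neg_add_cancel, sMonomial_zero]⟩

noncomputable def sHom (n : ℕ) : Multiplicative (Fin n →₀ ℤ) →* (LaurentRing n)ˣ where
  toFun a := sUnit n (Multiplicative.toAdd a)
  map_one' := by
    apply Units.ext
    show sMonomial n (Multiplicative.toAdd (1 : Multiplicative (Fin n →₀ ℤ))) = 1
    rw [toAdd_one, sMonomial_zero]
  map_mul' a b := by
    apply Units.ext
    show sMonomial n (Multiplicative.toAdd (a * b)) = sMonomial n _ * sMonomial n _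
    rw [toAdd_mul, sMonomial_mul]

lemma sUnit_zpow (n : ℕ) (j : Fin n →₀ ℤ) (z : ℤ) :
    (sUnit n j) ^ z = sUnit n (z • j) := by
  have := map_zpow (sHom n) (Multiplicative.ofAdd j) z
  simp only [sHom, MonoidHom.coe_mk, OneHom.coe_mk, toAdd_ofAdd] at this
  rw [← this]
  norm_num

/-- kill the variable `m` (set `s_m = 1`). -/
noncomputable def pim (n : ℕ) (m : Fin n) : LaurentRing n →+* LaurentRing n :=
  AddMonoidAlgebra.mapDomainRingHom ℤ
    (AddMonoidHom.mk' (fun g : Fin n →₀ ℤ => g.filter (· ≠ m)) (fun a b => Finsupp.filter_add))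

lemma pim_single (n : ℕ) (m : Fin n) (g : Fin n →₀ ℤ) (c : ℤ) :
    pim n m (AddMonoidAlgebra.single g c) = AddMonoidAlgebra.single (g.filter (· ≠ m)) c := by
  simp [pim, AddMonoidAlgebra.mapDomainRingHom, Finsupp.mapDomain_single]

lemma pim_idem (n : ℕ) (m : Fin n) (a : LaurentRing n) : pim n m (pim n m a) = pim n m a := by
  induction a using AddMonoidAlgebra.induction_linear with
  | zero => simp
  | add f g hf hg => rw [map_add, map_add, hf, hg]
  | single g c =>
      rw [pim_single, pim_single]
      congr 1
      ext k
      by_cases hk : k = m <;> simp [Finsupp.filter_apply, hk]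

lemma pim_sVar_self (n : ℕ) (m : Fin n) : pim n m (sVar n m) = 1 := by
  rw [sVar, pim_single, Finsupp.filter_single_of_neg _ (by simp), AddMonoidAlgebra.one_def]

lemma pim_sVar_ne (n : ℕ) (m k : Fin n) (h : k ≠ m) : pim n m (sVar n k) = sVar n k := by
  rw [sVar, pim_single, Finsupp.filter_single_of_pos (fun x => x ≠ m) h]

lemma one_sub_sVar_dvd (n : ℕ) (m : Fin n) (d : ℤ) :
    (1 - sVar n m) ∣ (1 - sMonomial n (Finsupp.single m d)) := by
  have hv : sVar n m * sMonomial n (Finsupp.single m (-1)) = 1 := by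
    rw [sVar_eq_sMonomial, sMonomial_mul, ← Finsupp.single_add, add_neg_cancel,
      Finsupp.single_zero, sMonomial_zero]
  induction d using Int.induction_on with
  | zero => simp [Finsupp.single_zero, sMonomial_zero]
  | succ d ih =>
      obtain ⟨e, he⟩ := ih
      refine ⟨e + sMonomial n (Finsupp.single m d), ?_⟩
      have hmul : sMonomial n (Finsupp.single m ((d : ℤ) + 1)) =
          sMonomial n (Finsupp.single m d) * sVar n m := by
        rw [sVar_eq_sMonomial, sMonomial_mul, ← Finsupp.single_add]
      rw [hmul]
      linear_combination he
  | pred d ih =>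
      obtain ⟨e, he⟩ := ih
      refine ⟨e - sMonomial n (Finsupp.single m (-d)) * sMonomial n (Finsupp.single m (-1)), ?_⟩
      have hmul : sMonomial n (Finsupp.single m (-(d : ℤ) - 1)) =
          sMonomial n (Finsupp.single m (-d)) * sMonomial n (Finsupp.single m (-1)) := by
        rw [sMonomial_mul, ← Finsupp.single_add]
        ring_nf
      rw [hmul]
      linear_combination he - sMonomial n (Finsupp.single m (-d)) * hv

lemma sub_pim_dvd (n : ℕ) (m : Fin n) (a : LaurentRing n) :
    ∃ q : LaurentRing n, a - pim n m a = q * (1 - sVar n m) := by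
  induction a using AddMonoidAlgebra.induction_linear with
  | zero => exact ⟨0, by simp⟩
  | add f g hf hg =>
      obtain ⟨q₁, h₁⟩ := hf
      obtain ⟨q₂, h₂⟩ := hg
      exact ⟨q₁ + q₂, by rw [map_add]; linear_combination h₁ + h₂⟩
  | single g c =>
      rw [pim_single]
      have hg : g = g.filter (· ≠ m) + Finsupp.single m (g m) := by
        ext k
        by_cases hk : k = m
        · subst hk; simp [Finsupp.filter_apply]
        · simp [Finsupp.filter_apply, hk, Finsupp.single_apply, Ne.symm hk]
      obtain ⟨e, he⟩ := one_sub_sVar_dvd n m (g m)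
      refine ⟨-(AddMonoidAlgebra.single (g.filter (· ≠ m)) c) * e, ?_⟩
      have hsplit : (AddMonoidAlgebra.single g c : LaurentRing n) =
          AddMonoidAlgebra.single (g.filter (· ≠ m)) c * sMonomial n (Finsupp.single m (g m)) := by
        rw [sMonomial, AddMonoidAlgebra.single_mul_single, mul_one, ← hg]
      linear_combination hsplit - (AddMonoidAlgebra.single (g.filter (· ≠ m)) c : LaurentRing n) * he

lemma one_sub_sVar_ne_zero (n : ℕ) (m : Fin n) : (1 - sVar n m : LaurentRing n) ≠ 0 := by
  rw [sub_ne_zero]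
  intro h
  rw [AddMonoidAlgebra.one_def, sVar] at h
  rcases AddMonoidAlgebra.single_inj.mp h.symm with ⟨h1, -⟩ | ⟨h1, -⟩
  · have := DFunLike.congr_fun h1 m
    simp [Finsupp.single_apply] at this
  · simp at h1

noncomputable def kappa (n : ℕ) (i m : Fin n) : Fin n → LaurentRing n :=
  fun k => (if k = i then 1 - sVar n m else 0) - (if k = m then 1 - sVar n i else 0)

noncomputable def KS (n : ℕ) : Submodule (LaurentRing n) (Fin n → LaurentRing n) :=
  Submodule.span (LaurentRing n) (Set.range (fun p : Fin n × Fin n => kappa n p.1 p.2))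

lemma mem_KS (n : ℕ) (A : Finset (Fin n)) (δ : Fin n → LaurentRing n)
    (hsupp : ∀ i ∉ A, δ i = 0)
    (hrel : ∑ i : Fin n, δ i * (1 - sVar n i) = 0) : δ ∈ KS n := by
  classical
  induction A using Finset.induction_on generalizing δ with
  | empty =>
      have : δ = 0 := funext fun i => hsupp i (Finset.notMem_empty i)
      rw [this]; exact zero_mem _
  | @insert m B hmB ih =>
      choose q hq using fun i => sub_pim_dvd n m (δ i)
      set q' : Fin n → LaurentRing n := fun i => if i = m then 0 else q i with hq'def
      set δ'' : Fin n → LaurentRing n := fun i => if i = m then 0 else pim n m (δ i) with hδ''def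
      set σ : Fin n → LaurentRing n := fun k => ∑ i : Fin n, q' i * kappa n i m k with hσdef
      -- coordinate formula for σ
      have hσ : ∀ k, σ k = q' k * (1 - sVar n m)
          - (if k = m then ∑ i : Fin n, q' i * (1 - sVar n i) else 0) := by
        intro k
        rw [hσdef]
        have : ∀ i : Fin n, q' i * kappa n i m k =
            (if k = i then q' i * (1 - sVar n m) else 0)
            - (if k = m then q' i * (1 - sVar n i) else 0) := by
          intro i
          unfold kappa
          split_ifs <;> ring
        simp only [this]
        rw [Finset.sum_sub_distrib]
        congr 1
        · simp [Finset.sum_ite_eq]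
        · by_cases hk : k = m <;> simp [hk]
      set r : LaurentRing n := δ m + ∑ i : Fin n, q' i * (1 - sVar n i) with hrdef
      -- decomposition of δ
      have hdec : δ = δ'' + σ + fun k => r * (if k = m then 1 else 0) := by
        funext k
        by_cases hk : k = m
        · subst hk
          rw [Pi.add_apply, Pi.add_apply, hσ k, if_pos rfl, if_pos rfl, mul_one]
          have hq'm : q' k = 0 := if_pos rfl
          have hδ''m : δ'' k = 0 := if_pos rfl
          rw [hq'm, hδ''m, hrdef]
          ring
        · rw [Pi.add_apply, Pi.add_apply, hσ k, if_neg hk, if_neg hk, mul_zero, add_zero]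
          have hq'k : q' k = q k := if_neg hk
          have hδ''k : δ'' k = pim n m (δ k) := if_neg hk
          rw [hq'k, hδ''k]
          linear_combination hq k
      -- the relation for δ''
      have hσrel : ∑ k : Fin n, σ k * (1 - sVar n k) = 0 := by
        have : ∀ k : Fin n, σ k * (1 - sVar n k) =
            q' k * (1 - sVar n m) * (1 - sVar n k)
            - (if k = m then (∑ i : Fin n, q' i * (1 - sVar n i)) * (1 - sVar n m) else 0) := by
          intro k
          rw [hσ k]
          split_ifs with hk
          · subst hk; ring
          · ring
        simp only [this]
        rw [Finset.sum_sub_distrib]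
        have h2 : ∑ k : Fin n, (if k = m then (∑ i : Fin n, q' i * (1 - sVar n i)) * (1 - sVar n m) else 0)
            = (∑ i : Fin n, q' i * (1 - sVar n i)) * (1 - sVar n m) := by
          simp [Finset.sum_ite_eq']
        rw [h2, sub_eq_zero, Finset.sum_mul]
        exact Finset.sum_congr rfl fun k _ => by ring
      have hrel2 : (∑ k : Fin n, δ'' k * (1 - sVar n k)) + r * (1 - sVar n m) = 0 := by
        have expand : ∑ k : Fin n, δ k * (1 - sVar n k) =
            (∑ k : Fin n, δ'' k * (1 - sVar n k)) + (∑ k : Fin n, σ k * (1 - sVar n k))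
            + ∑ k : Fin n, (r * (if k = m then 1 else 0)) * (1 - sVar n k) := by
          rw [← Finset.sum_add_distrib, ← Finset.sum_add_distrib]
          refine Finset.sum_congr rfl fun k _ => ?_
          rw [hdec]
          simp only [Pi.add_apply]
          ring
        have h3 : ∑ k : Fin n, (r * (if k = m then 1 else 0)) * (1 - sVar n k)
            = r * (1 - sVar n m) := by
          rw [Finset.sum_eq_single m]
          · simp
          · intro b _ hb; simp [hb]
          · intro h; exact absurd (Finset.mem_univ m) h
        rw [expand, hσrel, h3, add_zero] at hrel
        exact hrel
      -- apply pim to hrel2 to get the relation for δ''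
      have hδ''fix : ∀ k : Fin n, pim n m (δ'' k) * pim n m (1 - sVar n k)
          = δ'' k * (1 - sVar n k) := by
        intro k
        by_cases hk : k = m
        · subst hk; simp [hδ''def]
        · rw [hδ''def]
          simp only [if_neg hk]
          rw [pim_idem, map_sub, map_one, pim_sVar_ne n m k hk]
      have hrel'' : ∑ k : Fin n, δ'' k * (1 - sVar n k) = 0 := by
        have happ := congrArg (pim n m) hrel2
        rw [map_add, map_mul, map_sum, map_zero, map_sub, map_one, pim_sVar_self,
          sub_self, mul_zero, add_zero] at happ
        calc ∑ k : Fin n, δ'' k * (1 - sVar n k)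
            = ∑ k : Fin n, pim n m (δ'' k) * pim n m (1 - sVar n k) :=
              (Finset.sum_congr rfl fun k _ => (hδ''fix k).symm)
          _ = ∑ k : Fin n, pim n m (δ'' k * (1 - sVar n k)) :=
              Finset.sum_congr rfl fun k _ => (map_mul _ _ _).symm
          _ = 0 := happ
      have hr0 : r = 0 := by
        have : r * (1 - sVar n m) = 0 := by
          rw [hrel''] at hrel2; simpa using hrel2
        rcases mul_eq_zero.mp this with h | h
        · exact h
        · exact absurd h (one_sub_sVar_ne_zero n m)
      -- δ'' is in KS by induction
      have hδ''mem : δ'' ∈ KS n := by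
        refine ih δ'' (fun i hi => ?_) hrel''
        rw [hδ''def]
        by_cases him : i = m
        · simp [him]
        · have : i ∉ insert m B := by simp [him, hi]
          simp [him, hsupp i this]
      have hσmem : σ ∈ KS n := by
        have : σ = ∑ i : Fin n, q' i • kappa n i m := by
          funext k
          rw [hσdef]
          simp [Finset.sum_apply]
        rw [this]
        exact Submodule.sum_mem _ fun i _ =>
          Submodule.smul_mem _ _ (Submodule.subset_span ⟨(i, m), rfl⟩)
      have hz : δ'' + σ + (fun k : Fin n => (0 : LaurentRing n) * (if k = m then 1 else 0))
          = δ'' + σ := by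
        funext k; simp
      rw [hdec, hr0, hz]
      exact add_mem hδ''mem hσmem


noncomputable def eps (n : ℕ) : MagnusRing n →ₐ[LaurentRing n] LaurentRing n :=
  aeval (fun i => 1 - sVar n i)

lemma eps_C (n : ℕ) (c : LaurentRing n) : eps n (C c) = c := by simp [eps]

lemma eps_X (n : ℕ) (i : Fin n) : eps n (X i) = 1 - sVar n i := by simp [eps]

lemma eps_sum_C_X (n : ℕ) (γ : Fin n → LaurentRing n) :
    eps n (∑ i : Fin n, C (γ i) * X i) = ∑ i : Fin n, γ i * (1 - sVar n i) := by
  rw [map_sum]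
  exact Finset.sum_congr rfl fun i _ => by rw [map_mul, eps_C, eps_X]

noncomputable def M1 (n : ℕ) : Submodule (LaurentRing n) (MagnusRing n) :=
  Submodule.span (LaurentRing n) (Set.range (X : Fin n → MagnusRing n))

lemma sum_C_X_mem_M1 (n : ℕ) (γ : Fin n → LaurentRing n) :
    ∑ i : Fin n, C (γ i) * X i ∈ M1 n := by
  refine (Submodule.mem_span_range_iff_exists_fun _).mpr ⟨γ, ?_⟩
  exact Finset.sum_congr rfl fun i _ => smul_eq_C_mul _ _

lemma M1_elim (n : ℕ) {x : MagnusRing n} (hx : x ∈ M1 n) :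
    ∃ γ : Fin n → LaurentRing n, ∑ i : Fin n, C (γ i) * X i = x := by
  obtain ⟨c, hc⟩ := (Submodule.mem_span_range_iff_exists_fun _).mp hx
  exact ⟨c, by rw [← hc]; exact Finset.sum_congr rfl fun i _ => (smul_eq_C_mul _ _).symm⟩

lemma lowerTriv_inv_zero_one {R : Type*} [CommRing R] {A : (Matrix (Fin 2) (Fin 2) R)ˣ}
    (hA : A ∈ lowerTriv R) :
    A.val 0 0 * (A⁻¹).val 0 1 + A.val 0 1 = 0 := by
  obtain ⟨h0, h1⟩ := mem_lowerTriv.mp ((lowerTriv R).inv_mem hA)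
  have h : (A.val * (A⁻¹).val) 0 1 = (1 : Matrix (Fin 2) (Fin 2) R) 0 1 := by
    rw [show (A⁻¹).val = A.inv from rfl, A.val_inv]
  rw [Matrix.mul_apply, Fin.sum_univ_two, h1, mul_one] at h
  rw [Matrix.one_apply_ne (by norm_num)] at h
  linear_combination h

lemma inv_zero_zero_of_C {R : Type*} [CommRing R] {A : (Matrix (Fin 2) (Fin 2) R)ˣ}
    (hA : A ∈ lowerTriv R) (c : Rˣ) (hc : A.val 0 0 = c) :
    (A⁻¹).val 0 0 = ↑c⁻¹ := by
  have h := lowerTriv_inv_zero_zero hA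
  rw [hc] at h
  calc (A⁻¹).val 0 0 = (↑c⁻¹ * ↑c) * (A⁻¹).val 0 0 := by rw [Units.inv_mul, one_mul]
    _ = ↑c⁻¹ * (↑c * (A⁻¹).val 0 0) := by ring
    _ = ↑c⁻¹ := by rw [h, mul_one]

/-- units of the Laurent ring, coerced into the polynomial ring -/
noncomputable def CU (n : ℕ) : (LaurentRing n)ˣ →* (MagnusRing n)ˣ :=
  Units.map (C : LaurentRing n →+* MagnusRing n).toMonoidHom

/-- The subgroup characterizing the image of the Magnus representation. -/
noncomputable def magnusGrp (n : ℕ) : Subgroup (Matrix (Fin 2) (Fin 2) (MagnusRing n))ˣ where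
  carrier := {A | A.val 1 0 = 0 ∧ A.val 1 1 = 1 ∧
    (∃ c : (LaurentRing n)ˣ, A.val 0 0 = C (c : LaurentRing n)) ∧
    A.val 0 1 ∈ M1 n ∧ eps n (A.val 0 0) + eps n (A.val 0 1) = 1}
  one_mem' := by
    refine ⟨by simp, by simp, ⟨1, by simp⟩, ?_, ?_⟩
    · have : (1 : (Matrix (Fin 2) (Fin 2) (MagnusRing n))ˣ).val 0 1 = 0 := by simp
      rw [this]; exact zero_mem _
    · have h0 : (1 : (Matrix (Fin 2) (Fin 2) (MagnusRing n))ˣ).val 0 1 = 0 := by simp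
      have h1 : (1 : (Matrix (Fin 2) (Fin 2) (MagnusRing n))ˣ).val 0 0 = 1 := by simp
      rw [h0, h1, map_one, map_zero, add_zero]
  mul_mem' := by
    rintro A B ⟨ha0, ha1, ⟨c, hc⟩, ham, hae⟩ ⟨hb0, hb1, ⟨c', hc'⟩, hbm, hbe⟩
    have e00 : (A * B).val 0 0 = A.val 0 0 * B.val 0 0 := by
      simp [Units.val_mul, Matrix.mul_apply, Fin.sum_univ_two, hb0]
    have e01 : (A * B).val 0 1 = A.val 0 0 * B.val 0 1 + A.val 0 1 := by
      simp [Units.val_mul, Matrix.mul_apply, Fin.sum_univ_two, hb1]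
    refine ⟨?_, ?_, ⟨c * c', ?_⟩, ?_, ?_⟩
    · simp [Units.val_mul, Matrix.mul_apply, Fin.sum_univ_two, ha0, ha1, hb0]
    · simp [Units.val_mul, Matrix.mul_apply, Fin.sum_univ_two, ha0, ha1, hb1]
    · rw [e00, hc, hc', ← map_mul, Units.val_mul]
    · rw [e01, hc]
      exact add_mem (by simpa [smul_eq_C_mul] using (M1 n).smul_mem (c : LaurentRing n) hbm) ham
    · rw [e00, e01, map_mul, map_add, map_mul]
      linear_combination (eps n (A.val 0 0)) * hbe + hae
  inv_mem' := by
    rintro A ⟨ha0, ha1, ⟨c, hc⟩, ham, hae⟩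
    have hlt : A ∈ lowerTriv (MagnusRing n) := ⟨ha0, ha1⟩
    obtain ⟨hi0, hi1⟩ := mem_lowerTriv.mp ((lowerTriv (MagnusRing n)).inv_mem hlt)
    have hcu : A.val 0 0 = ((CU n c : (MagnusRing n)ˣ) : MagnusRing n) := by
      rw [hc]; rfl
    have h00 : (A⁻¹).val 0 0 = C ((c⁻¹ : (LaurentRing n)ˣ) : LaurentRing n) := by
      rw [inv_zero_zero_of_C hlt (CU n c) hcu]
      rw [← map_inv]; rfl
    have h01 : (A⁻¹).val 0 1 = -(C ((c⁻¹ : (LaurentRing n)ˣ) : LaurentRing n) * A.val 0 1) := by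
      have h := lowerTriv_inv_zero_one hlt
      rw [hc] at h
      have hinv : (C ((c⁻¹ : (LaurentRing n)ˣ) : LaurentRing n) : MagnusRing n)
          * C (c : LaurentRing n) = 1 := by
        rw [← map_mul, Units.inv_mul, map_one]
      calc (A⁻¹).val 0 1
          = (C ((c⁻¹ : (LaurentRing n)ˣ) : LaurentRing n) * C (c : LaurentRing n))
            * (A⁻¹).val 0 1 := by rw [hinv, one_mul]
        _ = C ((c⁻¹ : (LaurentRing n)ˣ) : LaurentRing n)
            * (C (c : LaurentRing n) * (A⁻¹).val 0 1) := by ring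
        _ = -(C ((c⁻¹ : (LaurentRing n)ˣ) : LaurentRing n) * A.val 0 1) := by
            rw [show (C (c : LaurentRing n) : MagnusRing n) * (A⁻¹).val 0 1 = -(A.val 0 1) by
              linear_combination h]
            ring
    refine ⟨hi0, hi1, ⟨c⁻¹, h00⟩, ?_, ?_⟩
    · rw [h01]
      have hm : C ((c⁻¹ : (LaurentRing n)ˣ) : LaurentRing n) * A.val 0 1 ∈ M1 n := by
        simpa [smul_eq_C_mul] using
          (M1 n).smul_mem ((c⁻¹ : (LaurentRing n)ˣ) : LaurentRing n) ham
      exact neg_mem hm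
    · rw [h00, h01, eps_C, map_neg, map_mul, eps_C]
      have h1 : eps n (A.val 0 0) = (c : LaurentRing n) := by rw [hc, eps_C]
      have h2 : ((c⁻¹ : (LaurentRing n)ˣ) : LaurentRing n) * (c : LaurentRing n) = 1 :=
        Units.inv_mul c
      rw [h1] at hae
      linear_combination (-((c⁻¹ : (LaurentRing n)ˣ) : LaurentRing n)) * hae + h2


lemma magnusUnit_mem (n : ℕ) (i : Fin n) : magnusUnit n i ∈ magnusGrp n := by
  have h00 : (magnusUnit n i).val 0 0 = C (sVar n i) := by simp [magnusUnit]
  have h01 : (magnusUnit n i).val 0 1 = X i := by simp [magnusUnit]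
  refine ⟨by simp [magnusUnit], by simp [magnusUnit],
    ⟨sUnit n (Finsupp.single i 1), by rw [h00]; rfl⟩, ?_, ?_⟩
  · rw [h01]
    exact Submodule.subset_span ⟨i, rfl⟩
  · rw [h00, h01, eps_C, eps_X]
    ring

lemma Magnus_mk (n : ℕ) (g : FreeGroup (Fin n)) :
    Magnus n (QuotientGroup.mk g) = magnusFree n g := rfl

lemma Magnus_mem (n : ℕ) (h : FreeMetabelian n) : Magnus n h ∈ magnusGrp n := by
  obtain ⟨g, rfl⟩ := QuotientGroup.mk_surjective h
  rw [Magnus_mk]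
  refine FreeGroup.range_lift_le (s := magnusGrp n) ?_ ⟨g, rfl⟩
  rintro A ⟨i, rfl⟩
  exact magnusUnit_mem n i

lemma Magnus_lowerTriv (n : ℕ) (h : FreeMetabelian n) :
    Magnus n h ∈ lowerTriv (MagnusRing n) := by
  obtain ⟨h1, h2, -⟩ := Magnus_mem n h
  exact ⟨h1, h2⟩

/-- the determinant character -/
noncomputable def chi (n : ℕ) : FreeGroup (Fin n) →* (LaurentRing n)ˣ :=
  FreeGroup.lift (fun i => sUnit n (Finsupp.single i 1))

noncomputable def prodGrp (n : ℕ) :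
    Subgroup ((Matrix (Fin 2) (Fin 2) (MagnusRing n))ˣ × (LaurentRing n)ˣ) where
  carrier := {p | p.1 ∈ lowerTriv (MagnusRing n) ∧
    p.1.val 0 0 = C ((p.2 : LaurentRing n))}
  one_mem' := ⟨one_mem _, by simp⟩
  mul_mem' := by
    rintro p q ⟨hp1, hp2⟩ ⟨hq1, hq2⟩
    refine ⟨mul_mem hp1 hq1, ?_⟩
    show (p.1 * q.1).val 0 0 = C ((((p.2 * q.2) : (LaurentRing n)ˣ) : LaurentRing n))
    rw [lowerTriv_mul_apply_zero_zero hq1, hp2, hq2, ← map_mul, Units.val_mul]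
  inv_mem' := by
    rintro p ⟨hp1, hp2⟩
    refine ⟨inv_mem hp1, ?_⟩
    have hcu : p.1.val 0 0 = ((CU n p.2 : (MagnusRing n)ˣ) : MagnusRing n) := by
      rw [hp2]; rfl
    show (p.1⁻¹).val 0 0 = C (((p.2⁻¹ : (LaurentRing n)ˣ) : LaurentRing n))
    rw [inv_zero_zero_of_C hp1 (CU n p.2) hcu, ← map_inv]; rfl

lemma magnusFree_00 (n : ℕ) (g : FreeGroup (Fin n)) :
    (magnusFree n g).val 0 0 = C ((chi n g : LaurentRing n)) := by
  have key : ∀ x : FreeGroup (Fin n),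
      ((magnusFree n).prod (chi n)) x ∈ prodGrp n := by
    intro x
    have hle : (⊤ : Subgroup (FreeGroup (Fin n))) ≤
        Subgroup.comap ((magnusFree n).prod (chi n)) (prodGrp n) := by
      rw [← FreeGroup.closure_range_of]
      rw [Subgroup.closure_le]
      rintro y ⟨i, rfl⟩
      refine ⟨magnusFree_mem_lowerTriv n (FreeGroup.of i), ?_⟩
      show (magnusFree n (FreeGroup.of i)).val 0 0 = C ((chi n (FreeGroup.of i) : LaurentRing n))
      rw [magnusFree, chi, FreeGroup.lift_apply_of, FreeGroup.lift_apply_of]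
      simp [magnusUnit]; rfl
    exact hle (Subgroup.mem_top x)
  exact (key g).2

lemma mat2_eq {R : Type*} [CommRing R] {a b c d a' b' c' d' : R}
    (h1 : a = a') (h2 : b = b') (h3 : c = c') (h4 : d = d') :
    !![a, b; c, d] = !![a', b'; c', d'] := by rw [h1, h2, h3, h4]

noncomputable def w0 (n : ℕ) (j : Fin n →₀ ℤ) : FreeGroup (Fin n) :=
  ((List.finRange n).map (fun i => (FreeGroup.of i) ^ (j i))).prod

lemma sUnit_list (n : ℕ) (l : List (Fin n)) (f : Fin n → (Fin n →₀ ℤ)) :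
    (l.map (fun i => sUnit n (f i))).prod = sUnit n ((l.map f).sum) := by
  induction l with
  | nil => exact Units.ext (sMonomial_zero n).symm
  | cons a l ih =>
      rw [List.map_cons, List.map_cons, List.prod_cons, List.sum_cons, ih]
      exact Units.ext (sMonomial_mul n _ _)

lemma chi_w0 (n : ℕ) (j : Fin n →₀ ℤ) : chi n (w0 n j) = sUnit n j := by
  rw [w0, map_list_prod, List.map_map]
  have h1 : ((chi n) ∘ fun i => (FreeGroup.of i) ^ (j i))
      = fun i => sUnit n (Finsupp.single i (j i)) := by
    funext i
    show chi n ((FreeGroup.of i) ^ (j i)) = _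
    rw [map_zpow, chi, FreeGroup.lift_apply_of, sUnit_zpow]
    congr 1
    ext k
    simp [Finsupp.single_apply]
  rw [h1, sUnit_list]
  congr 1
  rw [← Fin.sum_univ_def]
  ext k
  simp [Finsupp.single_apply]

lemma Magnus_w0_00 (n : ℕ) (j : Fin n →₀ ℤ) :
    (Magnus n (QuotientGroup.mk (w0 n j) : FreeMetabelian n)).val 0 0 = C (sMonomial n j) := by
  rw [Magnus_mk, magnusFree_00, chi_w0]; rfl

def imageSet (n : ℕ) : Set (MagnusRing n) :=
  {u | ∃ h : FreeMetabelian n, (Magnus n h).val = !![1, u; 0, 1]}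

lemma imageSet_zero (n : ℕ) : (0 : MagnusRing n) ∈ imageSet n := by
  refine ⟨1, ?_⟩
  rw [map_one, Units.val_one, Matrix.one_fin_two]

lemma imageSet_add (n : ℕ) {u v : MagnusRing n} (hu : u ∈ imageSet n) (hv : v ∈ imageSet n) :
    u + v ∈ imageSet n := by
  obtain ⟨h1, hh1⟩ := hu
  obtain ⟨h2, hh2⟩ := hv
  refine ⟨h1 * h2, ?_⟩
  rw [map_mul, Units.val_mul, hh1, hh2, Matrix.mul_fin_two]
  ext a b
  fin_cases a <;> fin_cases b <;> simp <;> ring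

lemma imageSet_neg (n : ℕ) {u : MagnusRing n} (hu : u ∈ imageSet n) : -u ∈ imageSet n := by
  obtain ⟨h, hh⟩ := hu
  set D : (Matrix (Fin 2) (Fin 2) (MagnusRing n))ˣ :=
    ⟨!![1, u; 0, 1], !![1, -u; 0, 1],
     by rw [Matrix.mul_fin_two]; ext a b; fin_cases a <;> fin_cases b <;> simp,
     by rw [Matrix.mul_fin_two]; ext a b; fin_cases a <;> fin_cases b <;> simp⟩ with hD
  have hMh : Magnus n h = D := Units.ext (by rw [hh])
  exact ⟨h⁻¹, by rw [map_inv, hMh]; rfl⟩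

lemma imageSet_zsmul (n : ℕ) {u : MagnusRing n} (hu : u ∈ imageSet n) :
    ∀ z : ℤ, z • u ∈ imageSet n := by
  intro z
  induction z using Int.induction_on with
  | zero => rw [zero_smul]; exact imageSet_zero n
  | succ d ih =>
      have : ((d : ℤ) + 1) • u = (d : ℤ) • u + u := by
        rw [add_smul, one_smul]
      rw [this]
      exact imageSet_add n ih hu
  | pred d ih =>
      have : (-(d : ℤ) - 1) • u = (-(d : ℤ)) • u + -u := by
        rw [sub_smul, one_smul, sub_eq_add_neg]
      rw [this]
      exact imageSet_add n ih (imageSet_neg n hu)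

lemma imageSet_monomial_smul (n : ℕ) (a : Fin n →₀ ℤ) {u : MagnusRing n}
    (hu : u ∈ imageSet n) : C (sMonomial n a) * u ∈ imageSet n := by
  obtain ⟨h, hh⟩ := hu
  set W : FreeMetabelian n := QuotientGroup.mk (w0 n a) with hWdef
  have l := Magnus_lowerTriv n W
  have li := (lowerTriv (MagnusRing n)).inv_mem l
  have hA10 : (Magnus n W).val 1 0 = 0 := l.1
  have hA11 : (Magnus n W).val 1 1 = 1 := l.2
  have hI10 : ((Magnus n W)⁻¹).val 1 0 = 0 := li.1
  have hI11 : ((Magnus n W)⁻¹).val 1 1 = 1 := li.2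
  have hI00 : (Magnus n W).val 0 0 * ((Magnus n W)⁻¹).val 0 0 = 1 := lowerTriv_inv_zero_zero l
  have hI01 : (Magnus n W).val 0 0 * ((Magnus n W)⁻¹).val 0 1 + (Magnus n W).val 0 1 = 0 :=
    lowerTriv_inv_zero_one l
  have hA00 : (Magnus n W).val 0 0 = C (sMonomial n a) := Magnus_w0_00 n a
  have hWval := Matrix.eta_fin_two ((Magnus n W).val)
  rw [hA00, hA10, hA11] at hWval
  have hIval := Matrix.eta_fin_two (((Magnus n W)⁻¹).val)
  rw [hI10, hI11] at hIval
  rw [hA00] at hI00 hI01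
  refine ⟨W * h * W⁻¹, ?_⟩
  rw [map_mul, map_mul, map_inv, Units.val_mul, Units.val_mul, hh, hWval, hIval,
    Matrix.mul_fin_two, Matrix.mul_fin_two]
  refine mat2_eq ?_ ?_ ?_ ?_
  · linear_combination hI00
  · linear_combination hI01
  · ring
  · ring

lemma imageSet_C_smul (n : ℕ) (c : LaurentRing n) {u : MagnusRing n}
    (hu : u ∈ imageSet n) : C c * u ∈ imageSet n := by
  induction c using AddMonoidAlgebra.induction_linear with
  | zero =>
      rw [map_zero, zero_mul]
      exact imageSet_zero n
  | add f g hf hg =>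
      rw [map_add, add_mul]
      exact imageSet_add n hf hg
  | single a z =>
      have h1 : (AddMonoidAlgebra.single a z : LaurentRing n) = z • sMonomial n a := by
        rw [sMonomial, AddMonoidAlgebra.smul_single]
        norm_num
      rw [h1, map_zsmul, smul_mul_assoc]
      exact imageSet_zsmul n (imageSet_monomial_smul n a hu) z

noncomputable def U (n : ℕ) : Submodule (LaurentRing n) (MagnusRing n) where
  carrier := imageSet n
  zero_mem' := imageSet_zero n
  add_mem' := imageSet_add n
  smul_mem' := fun c u hu => by
    simpa [smul_eq_C_mul] using imageSet_C_smul n c hu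

open scoped commutatorElement in
lemma kappa_mem_imageSet (n : ℕ) (i m : Fin n) :
    C (1 - sVar n m) * X i - C (1 - sVar n i) * X m ∈ imageSet n := by
  set u : MagnusRing n := C (1 - sVar n m) * X i - C (1 - sVar n i) * X m with hu
  set D : (Matrix (Fin 2) (Fin 2) (MagnusRing n))ˣ :=
    ⟨!![1, u; 0, 1], !![1, -u; 0, 1],
     by rw [Matrix.mul_fin_two]; ext a b; fin_cases a <;> fin_cases b <;> simp,
     by rw [Matrix.mul_fin_two]; ext a b; fin_cases a <;> fin_cases b <;> simp⟩ with hD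
  have hgen : ∀ k : Fin n, Magnus n (gen n k) = magnusUnit n k := by
    intro k
    rw [gen, Magnus_mk, magnusFree, FreeGroup.lift_apply_of]
  have key : magnusUnit n i * magnusUnit n m
      = D * (magnusUnit n m * magnusUnit n i) := by
    apply Units.ext
    rw [Units.val_mul, Units.val_mul, Units.val_mul]
    show (magnusUnit n i).val * (magnusUnit n m).val
      = !![1, u; 0, 1] * ((magnusUnit n m).val * (magnusUnit n i).val)
    rw [show (magnusUnit n i).val = !![C (sVar n i), X i; 0, 1] from rfl,
      show (magnusUnit n m).val = !![C (sVar n m), X m; 0, 1] from rfl,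
      Matrix.mul_fin_two, Matrix.mul_fin_two, Matrix.mul_fin_two]
    refine mat2_eq (by ring) ?_ (by ring) (by ring)
    rw [hu]
    simp only [map_sub, map_one]
    ring
  refine ⟨⁅gen n i, gen n m⁆, ?_⟩
  rw [map_commutatorElement, hgen i, hgen m, commutatorElement_def]
  have : magnusUnit n i * magnusUnit n m * (magnusUnit n i)⁻¹ * (magnusUnit n m)⁻¹ = D := by
    rw [key]
    group
  rw [this]

lemma mem_U (n : ℕ) (x : MagnusRing n) : x ∈ U n ↔ x ∈ imageSet n := Iff.rfl

lemma sum_C_X_mem_U (n : ℕ) (δ : Fin n → LaurentRing n) (hδKS : δ ∈ KS n) :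
    ∑ i : Fin n, C (δ i) * X i ∈ U n := by
  rw [KS] at hδKS
  induction hδKS using Submodule.span_induction with
  | mem x hx =>
      obtain ⟨⟨i, m⟩, rfl⟩ := hx
      have e : ∀ k : Fin n, C (kappa n i m k) * X k
          = (if k = i then C (1 - sVar n m) * X k else 0)
          - (if k = m then C (1 - sVar n i) * X k else 0) := by
        intro k
        unfold kappa
        split_ifs <;> simp [map_sub, sub_mul] <;> ring
      have key : ∑ k : Fin n, C (kappa n i m k) * X k
          = C (1 - sVar n m) * X i - C (1 - sVar n i) * X m := by
        rw [Finset.sum_congr rfl fun k _ => e k, Finset.sum_sub_distrib]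
        congr 1 <;> simp [Finset.sum_ite_eq']
      rw [mem_U, key]
      exact kappa_mem_imageSet n i m
  | zero =>
      have e : ∑ k : Fin n, C ((0 : Fin n → LaurentRing n) k) * X k = 0 := by simp
      rw [e]
      exact zero_mem _
  | add x y hx hy ihx ihy =>
      have e : ∑ k : Fin n, C ((x + y) k) * X k
          = (∑ k : Fin n, C (x k) * X k) + ∑ k : Fin n, C (y k) * X k := by
        rw [← Finset.sum_add_distrib]
        exact Finset.sum_congr rfl fun k _ => by rw [Pi.add_apply, map_add]; ring
      rw [e]
      exact add_mem ihx ihy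
  | smul a x hx ih =>
      have e : ∑ k : Fin n, C ((a • x) k) * X k = a • ∑ k : Fin n, C (x k) * X k := by
        rw [smul_eq_C_mul, Finset.mul_sum]
        exact Finset.sum_congr rfl fun k _ => by
          rw [Pi.smul_apply, smul_eq_mul, map_mul, mul_assoc]
      rw [e]
      exact Submodule.smul_mem _ _ ih

/-- A matrix `[[S, Σᵢ γᵢ tᵢ], [0, 1]]`, with `S` a Laurent monomial in the `sᵢ` and the
`γᵢ` Laurent polynomials in the `sᵢ`, lies in the image of the Magnus representation if
and only if `Σᵢ γᵢ (1 - sᵢ) = 1 - S`. -/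
theorem magnus_mem_image_iff (n : ℕ) (j : Fin n →₀ ℤ) (γ : Fin n → LaurentRing n) :
    (∃ g : FreeMetabelian n,
        (Magnus n g : Matrix (Fin 2) (Fin 2) (MagnusRing n)) =
          !![C (sMonomial n j), ∑ i : Fin n, C (γ i) * X i; 0, 1]) ↔
      ∑ i : Fin n, γ i * (1 - sVar n i) = 1 - sMonomial n j := by
  constructor
  · rintro ⟨g, hg⟩
    obtain ⟨-, -, -, -, he⟩ := Magnus_mem n g
    rw [hg] at he
    have h00 : (!![C (sMonomial n j), ∑ i : Fin n, C (γ i) * X i; 0, 1] :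
        Matrix (Fin 2) (Fin 2) (MagnusRing n)) 0 0 = C (sMonomial n j) := rfl
    have h01 : (!![C (sMonomial n j), ∑ i : Fin n, C (γ i) * X i; 0, 1] :
        Matrix (Fin 2) (Fin 2) (MagnusRing n)) 0 1 = ∑ i : Fin n, C (γ i) * X i := rfl
    rw [h00, h01, eps_C, eps_sum_C_X] at he
    linear_combination he
  · intro hγ
    set W : FreeMetabelian n := QuotientGroup.mk (w0 n j) with hW
    have hW00 : (Magnus n W).val 0 0 = C (sMonomial n j) := Magnus_w0_00 n j
    obtain ⟨h10, h11, -, hm, he⟩ := Magnus_mem n W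
    obtain ⟨γ0, hγ0⟩ := M1_elim n hm
    have hγ0rel : ∑ i : Fin n, γ0 i * (1 - sVar n i) = 1 - sMonomial n j := by
      rw [hW00, ← hγ0, eps_C, eps_sum_C_X] at he
      linear_combination he
    set δ : Fin n → LaurentRing n := fun i => sMonomial n (-j) * (γ i - γ0 i) with hδ
    have hδrel : ∑ i : Fin n, δ i * (1 - sVar n i) = 0 := by
      have e1 : ∑ i : Fin n, δ i * (1 - sVar n i)
          = sMonomial n (-j)
            * ∑ i : Fin n, (γ i * (1 - sVar n i) - γ0 i * (1 - sVar n i)) := by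
        rw [Finset.mul_sum]
        exact Finset.sum_congr rfl fun i _ => by rw [hδ]; ring
      rw [e1, Finset.sum_sub_distrib, hγ, hγ0rel, sub_self, mul_zero]
    have hδKS : δ ∈ KS n :=
      mem_KS n Finset.univ δ (fun i hi => absurd (Finset.mem_univ i) hi) hδrel
    have hδU : ∑ i : Fin n, C (δ i) * X i ∈ U n := sum_C_X_mem_U n δ hδKS
    obtain ⟨g1, hg1⟩ := (mem_U n _).mp hδU
    refine ⟨W * g1, ?_⟩
    rw [map_mul, Units.val_mul, hg1]
    have hWval := Matrix.eta_fin_two ((Magnus n W).val)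
    rw [hW00, h10, h11] at hWval
    rw [hWval, Matrix.mul_fin_two]
    refine mat2_eq (by ring) ?_ (by ring) (by ring)
    rw [← hγ0]
    have hC : ∀ i : Fin n, C (sMonomial n j) * (C (δ i) * X i) = C (γ i - γ0 i) * X i := by
      intro i
      rw [← mul_assoc, ← map_mul]
      congr 2
      simp only [hδ]
      rw [← mul_assoc, sMonomial_mul, add_neg_cancel, sMonomial_zero, one_mul]
    rw [mul_one, Finset.mul_sum, Finset.sum_congr rfl fun i _ => hC i,
      ← Finset.sum_add_distrib]
    exact Finset.sum_congr rfl fun i _ => by rw [map_sub]; ring
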